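/- Let X_1,...,X_n be random variables with range [0,b], and suppose there exist constants μ and C with 0 < C < μ such that |E[X_t | X_1,...,X_{t-1}] - μ| ≤ C for all t. Let S_n = X_1 + ... + X_n. Then for all a ≥ 0, P(S_n ≥ n(μ+C) + a) ≤ exp(-2(a(μ-C)/(b(μ+C)))²/n). -/

import Mathlib

open MeasureTheory

open Real in
lemma hoeffding_core (p : ℝ) (hp0 : 0 ≤ p) (u : ℝ) (hu : 0 ≤ u) :
    1 - p + p * Real.exp u ≤ Real.exp (p * u + u ^ 2 / 8) := by
  set D : ℝ → ℝ := fun v => 1 - p + p * Real.exp v with hDdef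
  have hD1 : ∀ v, 0 ≤ v → (1:ℝ) ≤ D v := by
    intro v hv
    have : (1:ℝ) ≤ Real.exp v := Real.one_le_exp hv
    simp only [hDdef]
    nlinarith
  have hDne : ∀ v, 0 ≤ v → D v ≠ 0 := fun v hv => by linarith [hD1 v hv]
  have hDderiv : ∀ v, HasDerivAt D (p * Real.exp v) v := by
    intro v
    exact ((Real.hasDerivAt_exp v).const_mul p).const_add (1 - p)
  set g : ℝ → ℝ := fun v => p + v / 4 - p * Real.exp v / D v with hgdef
  set f : ℝ → ℝ := fun v => p * v + v ^ 2 / 8 - Real.log (D v) with hfdef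
  have hfderiv : ∀ v, 0 ≤ v → HasDerivAt f (g v) v := by
    intro v hv
    have h1 : HasDerivAt (fun w : ℝ => p * w + w ^ 2 / 8) (p + 2 * v ^ 1 / 8) v := by
      exact (((hasDerivAt_id v).const_mul p).add ((hasDerivAt_pow 2 v).div_const 8)).congr_deriv
        (by ring)
    have h2 : HasDerivAt (fun w => Real.log (D w)) (p * Real.exp v / D v) v :=
      (hDderiv v).log (hDne v hv)
    have := h1.sub h2
    refine this.congr_deriv ?_
    show _ = p + v / 4 - p * Real.exp v / D v; ring
  have hgderiv : ∀ v, 0 ≤ v → HasDerivAt g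
      (1 / 4 - (p * Real.exp v * D v - p * Real.exp v * (p * Real.exp v)) / (D v) ^ 2) v := by
    intro v hv
    have hN : HasDerivAt (fun w => p * Real.exp w) (p * Real.exp v) v :=
      (Real.hasDerivAt_exp v).const_mul p
    have hq : HasDerivAt (fun w => p * Real.exp w / D w)
        ((p * Real.exp v * D v - p * Real.exp v * (p * Real.exp v)) / (D v) ^ 2) v :=
      hN.div (hDderiv v) (hDne v hv)
    have := ((hasDerivAt_const v p).add ((hasDerivAt_id v).div_const 4)).sub hq
    refine this.congr_deriv ?_
    ring
  have hg_nonneg : ∀ v ∈ interior (Set.Ici (0:ℝ)), 0 ≤ deriv g v := by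
    intro v hv
    rw [interior_Ici] at hv
    have hv' : (0:ℝ) ≤ v := le_of_lt hv
    rw [(hgderiv v hv').deriv]
    set q : ℝ := p * Real.exp v / D v with hq
    have hDv := hDne v hv'
    have hrw : (p * Real.exp v * D v - p * Real.exp v * (p * Real.exp v)) / (D v) ^ 2
        = q - q ^ 2 := by
      field_simp [hq]
      rw [hq]; field_simp
    rw [hrw]
    nlinarith [sq_nonneg (2 * q - 1)]
  have hgcont : ContinuousOn g (Set.Ici 0) := fun v hv =>
    (hgderiv v hv).continuousAt.continuousWithinAt
  have hgdiff : DifferentiableOn ℝ g (interior (Set.Ici (0:ℝ))) := by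
    intro v hv
    rw [interior_Ici] at hv
    exact (hgderiv v hv.le).differentiableAt.differentiableWithinAt
  have hgmono : MonotoneOn g (Set.Ici 0) :=
    monotoneOn_of_deriv_nonneg (convex_Ici 0) hgcont hgdiff hg_nonneg
  have hg0 : g 0 = 0 := by
    simp [hgdef, hDdef]
  have hg_pos : ∀ v ∈ interior (Set.Ici (0:ℝ)), 0 ≤ deriv f v := by
    intro v hv
    rw [interior_Ici] at hv
    rw [(hfderiv v hv.le).deriv]
    have := hgmono (Set.self_mem_Ici) (Set.mem_Ici.mpr hv.le) hv.le
    rwa [hg0] at this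
  have hfcont : ContinuousOn f (Set.Ici 0) := fun v hv =>
    (hfderiv v hv).continuousAt.continuousWithinAt
  have hfdiff : DifferentiableOn ℝ f (interior (Set.Ici (0:ℝ))) := by
    intro v hv
    rw [interior_Ici] at hv
    exact (hfderiv v hv.le).differentiableAt.differentiableWithinAt
  have hfmono : MonotoneOn f (Set.Ici 0) :=
    monotoneOn_of_deriv_nonneg (convex_Ici 0) hfcont hfdiff hg_pos
  have hf0 : f 0 = 0 := by simp [hfdef, hDdef]
  have hfu : 0 ≤ f u := by
    have := hfmono Set.self_mem_Ici (Set.mem_Ici.mpr hu) hu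
    rwa [hf0] at this
  have hlog : Real.log (D u) ≤ p * u + u ^ 2 / 8 := by
    simp only [hfdef] at hfu; linarith
  calc D u = Real.exp (Real.log (D u)) :=
        (Real.exp_log (by linarith [hD1 u hu])).symm
    _ ≤ Real.exp (p * u + u ^ 2 / 8) := Real.exp_le_exp.mpr hlog

/-- Convexity bound: for `x ∈ [0,b]`, `exp (l*x) ≤ 1 + (exp (l*b) - 1) * (x / b)`. -/
lemma exp_convex_bound (b l x : ℝ) (hb : 0 < b) (hx0 : 0 ≤ x) (hxb : x ≤ b) :
    Real.exp (l * x) ≤ 1 - x / b + x / b * Real.exp (l * b) := by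
  have hθ0 : 0 ≤ x / b := div_nonneg hx0 hb.le
  have hθ1 : x / b ≤ 1 := (div_le_one hb).mpr hxb
  have h := convexOn_exp.2 (Set.mem_univ (0:ℝ)) (Set.mem_univ (l * b))
    (by linarith : (0:ℝ) ≤ 1 - x / b) hθ0 (by ring)
  simp only [smul_eq_mul, mul_zero, Real.exp_zero, mul_one] at h
  have hxx : (0:ℝ) + x / b * (l * b) = l * x := by
    field_simp; ring
  rw [hxx] at h
  linarith [h]

/-- The natural sub-σ-algebra generated by `X 0, ..., X (n-1)`. -/
def Fil {Ω : Type*} (X : ℕ → Ω → ℝ) (n : ℕ) : MeasurableSpace Ω :=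
  ⨆ i ∈ Finset.range n, MeasurableSpace.comap (X i) inferInstance

/-- mgf bound for the partial sums. -/
lemma mgf_sum_bound {Ω : Type*} [m0 : MeasurableSpace Ω] (P : Measure Ω)
    [IsProbabilityMeasure P]
    (X : ℕ → Ω → ℝ) (b ν : ℝ) (hb : 0 < b) (hν : 0 ≤ ν)
    (hmeas : ∀ t, Measurable (X t))
    (hrange : ∀ t, ∀ᵐ ω ∂P, X t ω ∈ Set.Icc 0 b)
    (hcond : ∀ t, ∀ᵐ ω ∂P,
      (P[X t | ⨆ i ∈ Finset.range t, MeasurableSpace.comap (X i) inferInstance]) ω ≤ ν)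
    (l : ℝ) (hl : 0 ≤ l) (n : ℕ) :
    ∫ ω, Real.exp (l * ∑ t ∈ Finset.range n, X t ω) ∂P
      ≤ (Real.exp (l * ν + l ^ 2 * b ^ 2 / 8)) ^ n := by
  have hK0 : (0:ℝ) < Real.exp (l * ν + l ^ 2 * b ^ 2 / 8) := Real.exp_pos _
  -- integrability helper
  have int_bdd : ∀ (f : Ω → ℝ), Measurable f → ∀ M : ℝ, (∀ᵐ ω ∂P, ‖f ω‖ ≤ M) →
      Integrable f P := fun f hf M hM =>
    Integrable.mono' (integrable_const M) hf.aestronglyMeasurable hM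
  induction n with
  | zero => simp
  | succ n ih =>
    have hm : Fil X n ≤ m0 := by
      refine iSup_le fun i => iSup_le fun _ => ?_
      exact measurable_iff_comap_le.mp (hmeas i)
    set S : Ω → ℝ := fun ω => ∑ t ∈ Finset.range n, X t ω with hSdef
    have hSmeas : Measurable S := Finset.measurable_sum _ fun i _ => hmeas i
    have hSm : Measurable[Fil X n] S := by
      refine Finset.measurable_sum (m := Fil X n) _ fun i hi => ?_
      have hle : MeasurableSpace.comap (X i) inferInstance ≤ Fil X n :=
        le_iSup₂ (f := fun i (_ : i ∈ Finset.range n) =>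
          MeasurableSpace.comap (X i) inferInstance) i hi
      exact measurable_iff_comap_le.mpr hle
    set f : Ω → ℝ := fun ω => Real.exp (l * S ω) with hfdef
    set g : Ω → ℝ := fun ω => Real.exp (l * X n ω) with hgdef
    have hfm : Measurable[Fil X n] f := (hSm.const_mul l).exp
    have hf_sm : StronglyMeasurable[Fil X n] f := hfm.stronglyMeasurable
    have hfmeas : Measurable f := ((hSmeas.const_mul l)).exp
    have hgmeas : Measurable g := ((hmeas n).const_mul l).exp
    -- bounds
    have hSbdd : ∀ᵐ ω ∂P, 0 ≤ S ω ∧ S ω ≤ n * b := by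
      have hr : ∀ᵐ ω ∂P, ∀ t, X t ω ∈ Set.Icc 0 b := ae_all_iff.mpr hrange
      filter_upwards [hr] with ω hω
      constructor
      · exact Finset.sum_nonneg fun i _ => (hω i).1
      · calc S ω ≤ ∑ t ∈ Finset.range n, b := Finset.sum_le_sum fun i _ => (hω i).2
          _ = n * b := by simp [mul_comm]
    have hfbdd : ∀ᵐ ω ∂P, ‖f ω‖ ≤ Real.exp (l * (n * b)) := by
      filter_upwards [hSbdd] with ω hω
      rw [Real.norm_eq_abs, abs_of_pos (Real.exp_pos _)]
      exact Real.exp_le_exp.mpr (mul_le_mul_of_nonneg_left hω.2 hl)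
    have hgbdd : ∀ᵐ ω ∂P, ‖g ω‖ ≤ Real.exp (l * b) := by
      filter_upwards [hrange n] with ω hω
      rw [Real.norm_eq_abs, abs_of_pos (Real.exp_pos _)]
      exact Real.exp_le_exp.mpr (mul_le_mul_of_nonneg_left hω.2 hl)
    have hf_int : Integrable f P := int_bdd f hfmeas _ hfbdd
    have hg_int : Integrable g P := int_bdd g hgmeas _ hgbdd
    have hfg_int : Integrable (f * g) P := by
      refine int_bdd (f * g) (hfmeas.mul hgmeas) (Real.exp (l * (n * b)) * Real.exp (l * b)) ?_
      filter_upwards [hfbdd, hgbdd] with ω h1 h2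
      calc ‖f ω * g ω‖ = ‖f ω‖ * ‖g ω‖ := norm_mul _ _
        _ ≤ _ := mul_le_mul h1 h2 (norm_nonneg _) (Real.exp_pos _).le
    -- conditional expectation bound for g
    have hX_int : Integrable (X n) P := by
      refine int_bdd (X n) (hmeas n) b ?_
      filter_upwards [hrange n] with ω hω
      rw [Real.norm_eq_abs, abs_of_nonneg hω.1]; exact hω.2
    set c : ℝ := (Real.exp (l * b) - 1) / b with hcdef
    have hexp1 : (1:ℝ) ≤ Real.exp (l * b) := Real.one_le_exp (mul_nonneg hl hb.le)
    have hc0 : 0 ≤ c := div_nonneg (by linarith) hb.le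
    have hcX_int : Integrable (fun ω => 1 + c * X n ω) P :=
      (integrable_const (1:ℝ)).add (hX_int.const_mul c)
    have h_ptwise : ∀ᵐ ω ∂P, g ω ≤ 1 + c * X n ω := by
      filter_upwards [hrange n] with ω hω
      have := exp_convex_bound b l (X n ω) hb hω.1 hω.2
      have hbne : b ≠ 0 := hb.ne'
      calc g ω ≤ 1 - X n ω / b + X n ω / b * Real.exp (l * b) := this
        _ = 1 + c * X n ω := by rw [hcdef]; field_simp; ring
    have h1 : P[g | Fil X n] ≤ᵐ[P] P[(fun ω => 1 + c * X n ω) | Fil X n] :=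
      condExp_mono hg_int hcX_int h_ptwise
    have h2 : P[(fun ω => 1 + c * X n ω) | Fil X n]
        =ᵐ[P] fun ω => 1 + c * (P[X n | Fil X n]) ω := by
      have e1 : P[(fun ω => 1 + c * X n ω) | Fil X n]
          =ᵐ[P] P[(fun _ => (1:ℝ)) | Fil X n] + P[(fun ω => c * X n ω) | Fil X n] :=
        condExp_add (integrable_const 1) (hX_int.const_mul c) _
      have e2 : P[(fun ω => c * X n ω) | Fil X n] =ᵐ[P] fun ω => c * (P[X n | Fil X n]) ω := by
        have := condExp_smul (μ := P) (m := Fil X n) (c : ℝ) (X n)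
        exact this
      have e3 : P[(fun _ => (1:ℝ)) | Fil X n] = fun _ => (1:ℝ) := condExp_const hm 1
      filter_upwards [e1, e2] with ω h1' h2'
      simp only [h1', Pi.add_apply, e3, h2']
    -- bounds on the conditional expectation of X n
    have hE0 : 0 ≤ᵐ[P] P[X n | Fil X n] :=
      condExp_nonneg (by filter_upwards [hrange n] with ω hω using hω.1)
    have hEb : P[X n | Fil X n] ≤ᵐ[P] fun _ => b := by
      have := condExp_mono (m := Fil X n) hX_int (integrable_const b)
        (by filter_upwards [hrange n] with ω hω using hω.2)
      rwa [condExp_const hm b] at this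
    have hEν : ∀ᵐ ω ∂P, (P[X n | Fil X n]) ω ≤ ν := by
      have := hcond n
      simpa [Fil] using this
    have h3 : P[g | Fil X n] ≤ᵐ[P] fun _ => Real.exp (l * ν + l ^ 2 * b ^ 2 / 8) := by
      filter_upwards [h1, h2, hE0, hEb, hEν] with ω ha1 ha2 ha3 ha4 ha5
      rw [ha2] at ha1
      refine ha1.trans ?_
      set e := (P[X n | Fil X n]) ω
      have key := hoeffding_core (e / b) (div_nonneg ha3 hb.le) (l * b)
        (mul_nonneg hl hb.le)
      have hbne : b ≠ 0 := hb.ne'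
      have lhs_eq : 1 + c * e = 1 - e / b + e / b * Real.exp (l * b) := by
        rw [hcdef]; field_simp; ring
      have exp_eq : e / b * (l * b) + (l * b) ^ 2 / 8 = l * e + l ^ 2 * b ^ 2 / 8 := by
        field_simp
      rw [lhs_eq]
      refine key.trans ?_
      rw [exp_eq]
      exact Real.exp_le_exp.mpr (by nlinarith)
    -- put things together
    have hsum : ∀ ω, Real.exp (l * ∑ t ∈ Finset.range (n+1), X t ω) = f ω * g ω := by
      intro ω
      rw [Finset.sum_range_succ, mul_add, Real.exp_add]
    calc ∫ ω, Real.exp (l * ∑ t ∈ Finset.range (n+1), X t ω) ∂P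
        = ∫ ω, f ω * g ω ∂P := by simp only [hsum]
      _ = ∫ ω, (P[f * g | Fil X n]) ω ∂P := (integral_condExp hm).symm
      _ = ∫ ω, f ω * (P[g | Fil X n]) ω ∂P := by
          refine integral_congr_ae ?_
          filter_upwards [condExp_mul_of_stronglyMeasurable_left hf_sm hfg_int hg_int] with ω hω
          exact hω
      _ ≤ ∫ ω, f ω * Real.exp (l * ν + l ^ 2 * b ^ 2 / 8) ∂P := by
          refine integral_mono_ae ?_ (hf_int.mul_const _) ?_
          · exact integrable_condExp.congr (condExp_mul_of_stronglyMeasurable_left hf_sm hfg_int hg_int)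
          · filter_upwards [h3] with ω hω
            exact mul_le_mul_of_nonneg_left hω (Real.exp_pos _).le
      _ = (∫ ω, f ω ∂P) * Real.exp (l * ν + l ^ 2 * b ^ 2 / 8) := integral_mul_const _ _
      _ ≤ (Real.exp (l * ν + l ^ 2 * b ^ 2 / 8)) ^ n
            * Real.exp (l * ν + l ^ 2 * b ^ 2 / 8) := by
          exact mul_le_mul_of_nonneg_right ih hK0.le
      _ = (Real.exp (l * ν + l ^ 2 * b ^ 2 / 8)) ^ (n + 1) := (pow_succ _ n).symm

/-- Drift-tolerant Chernoff–Hoeffding bound, upper tail (Lemma 1, eq. (6)). -/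
theorem stmt0 {Ω : Type*} [MeasurableSpace Ω] (P : Measure Ω) [IsProbabilityMeasure P]
    (n : ℕ) (X : ℕ → Ω → ℝ) (b μ C : ℝ) (hb : 0 < b) (hC : 0 < C) (hCμ : C < μ)
    (hmeas : ∀ t, Measurable (X t))
    (hrange : ∀ t, ∀ᵐ ω ∂P, X t ω ∈ Set.Icc 0 b)
    (hcond : ∀ t, ∀ᵐ ω ∂P,
      |(P[X t | ⨆ i ∈ Finset.range t, MeasurableSpace.comap (X i) inferInstance]) ω - μ| ≤ C)
    (a : ℝ) (ha : 0 ≤ a) :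
    P {ω | (n : ℝ) * (μ + C) + a ≤ ∑ t ∈ Finset.range n, X t ω}
      ≤ ENNReal.ofReal (Real.exp (-2 * (a * (μ - C) / (b * (μ + C))) ^ 2 / n)) := by
  set ν : ℝ := μ + C with hνdef
  have hν : 0 < ν := by linarith
  by_cases htriv : n = 0 ∨ a = 0
  · have hRHS : Real.exp (-2 * (a * (μ - C) / (b * (μ + C))) ^ 2 / n) = 1 := by
      rcases htriv with h | h
      · subst h; simp
      · subst h; simp
    rw [hRHS]
    calc P _ ≤ 1 := prob_le_one
      _ = ENNReal.ofReal 1 := by simp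
  · push_neg at htriv
    obtain ⟨hn0, ha0⟩ := htriv
    have hn1 : 1 ≤ n := Nat.one_le_iff_ne_zero.mpr hn0
    have hnR : (0:ℝ) < n := by exact_mod_cast Nat.pos_of_ne_zero hn0
    have haR : 0 < a := lt_of_le_of_ne ha (Ne.symm ha0)
    set l : ℝ := 4 * a / (n * b ^ 2) with hldef
    have hl : 0 < l := by positivity
    have hcond' : ∀ t, ∀ᵐ ω ∂P,
        (P[X t | ⨆ i ∈ Finset.range t, MeasurableSpace.comap (X i) inferInstance]) ω ≤ ν := by
      intro t
      filter_upwards [hcond t] with ω hω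
      have := (abs_le.mp hω).2
      linarith
    have hmgf := mgf_sum_bound P X b ν hb hν.le hmeas hrange hcond' l hl.le n
    set S : Ω → ℝ := fun ω => ∑ t ∈ Finset.range n, X t ω with hSdef
    have hS_int : Integrable (fun ω => Real.exp (l * S ω)) P := by
      refine Integrable.mono' (integrable_const (Real.exp (l * (n * b))))
        (((Finset.measurable_sum _ fun i _ => hmeas i).const_mul l).exp).aestronglyMeasurable ?_
      have hr : ∀ᵐ ω ∂P, ∀ t, X t ω ∈ Set.Icc 0 b := ae_all_iff.mpr hrange
      filter_upwards [hr] with ω hω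
      rw [Real.norm_eq_abs, abs_of_pos (Real.exp_pos _)]
      refine Real.exp_le_exp.mpr (mul_le_mul_of_nonneg_left ?_ hl.le)
      calc S ω ≤ ∑ t ∈ Finset.range n, b := Finset.sum_le_sum fun i _ => (hω i).2
        _ = n * b := by simp [mul_comm]
    have hcher := ProbabilityTheory.measure_ge_le_exp_mul_mgf (X := S) (μ := P)
      (n * ν + a) hl.le hS_int
    have hmgf' : ProbabilityTheory.mgf S P l ≤ Real.exp (n * (l * ν + l ^ 2 * b ^ 2 / 8)) := by
      rw [ProbabilityTheory.mgf]
      rw [Real.exp_nat_mul]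
      exact hmgf
    have hmgf_nn : 0 ≤ ProbabilityTheory.mgf S P l := ProbabilityTheory.mgf_nonneg
    have hstep : Real.exp (-l * (n * ν + a)) * ProbabilityTheory.mgf S P l
        ≤ Real.exp (-2 * (a * (μ - C) / (b * (μ + C))) ^ 2 / n) := by
      calc Real.exp (-l * (n * ν + a)) * ProbabilityTheory.mgf S P l
          ≤ Real.exp (-l * (n * ν + a)) * Real.exp (n * (l * ν + l ^ 2 * b ^ 2 / 8)) :=
            mul_le_mul_of_nonneg_left hmgf' (Real.exp_pos _).le
        _ = Real.exp (-l * (n * ν + a) + n * (l * ν + l ^ 2 * b ^ 2 / 8)) :=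
            (Real.exp_add _ _).symm
        _ ≤ Real.exp (-2 * (a * (μ - C) / (b * ν)) ^ 2 / n) := by
            refine Real.exp_le_exp.mpr ?_
            have hexp_eq : -l * (n * ν + a) + n * (l * ν + l ^ 2 * b ^ 2 / 8)
                = -2 * a ^ 2 / (n * b ^ 2) := by
              rw [hldef]
              field_simp
              ring
            rw [hexp_eq]
            have h1 : 0 < μ - C := by linarith
            have h2 : (μ - C) / ν ≤ 1 := by
              rw [div_le_one hν]; linarith
            have h3 : 0 ≤ (μ - C) / ν := by positivity
            have hrw : a * (μ - C) / (b * ν) = a / b * ((μ - C) / ν) := by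
              field_simp
            rw [hrw]
            have hr2 : ((μ - C) / ν) ^ 2 ≤ 1 := pow_le_one₀ h3 h2
            have h4 : (a / b * ((μ - C) / ν)) ^ 2 ≤ (a / b) ^ 2 := by
              rw [mul_pow]
              calc (a / b) ^ 2 * ((μ - C) / ν) ^ 2 ≤ (a / b) ^ 2 * 1 :=
                    mul_le_mul_of_nonneg_left hr2 (sq_nonneg _)
                _ = (a / b) ^ 2 := mul_one _
            have h5 : -2 * a ^ 2 / (n * b ^ 2) = -2 * (a / b) ^ 2 / n := by
              field_simp
            rw [h5, div_le_div_iff_of_pos_right hnR]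
            nlinarith [h4]
    calc P {ω | (n:ℝ) * ν + a ≤ S ω}
        = ENNReal.ofReal (P {ω | (n:ℝ) * ν + a ≤ S ω}).toReal :=
          (ENNReal.ofReal_toReal (measure_ne_top P _)).symm
      _ ≤ ENNReal.ofReal (Real.exp (-2 * (a * (μ - C) / (b * ν)) ^ 2 / n)) :=
          ENNReal.ofReal_le_ofReal (hcher.trans hstep)
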